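/- arXiv:2110.14225 — 2 statements merged into one kernel-verified Lean document; each statement's English description precedes it below -/
import Mathlib

section
/- Let V be a real vector space, let s be a symmetric positive semidefinite bilinear form on V, let ⦀·⦀₀ be a seminorm on V, let α ≥ 0, and define the augmented energy norm ⦀v⦀_α := (⦀v⦀₀² + α·s(v, v))^{1/2}. Let B be a bilinear form on V, let V_h be a subspace of V, and let C_c ≥ 0 and C_b ≥ 0 be constants such that: (coercivity) ⦀v⦀_α² ≤ C_c·B(v, v) for all v ∈ V_h; (continuity) |B(v, w)| ≤ C_b·⦀v⦀_α·⦀w⦀_α for all v, w ∈ V; and let u ∈ V and u_h ∈ V_h satisfy the perturbed Galerkin orthogonality B(u − u_h, v) = α·s(u, v) for all v ∈ V_h. Then for every w_h ∈ V_h, ⦀u − u_h⦀_α ≤ (1 + C_c·C_b)·⦀u − w_h⦀_α + C_c·α^{1/2}·s(u, u)^{1/2}. -/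
private lemma two_dim_cs (a b c d : ℝ) (ha : 0 ≤ a) (hb : 0 ≤ b) (hc : 0 ≤ c) (hd : 0 ≤ d) :
    a * c + b * d ≤ Real.sqrt (a ^ 2 + b ^ 2) * Real.sqrt (c ^ 2 + d ^ 2) := by
  have h : (a * c + b * d) ^ 2 ≤ (a ^ 2 + b ^ 2) * (c ^ 2 + d ^ 2) := by
    nlinarith [sq_nonneg (a * d - b * c)]
  calc a * c + b * d = Real.sqrt ((a * c + b * d) ^ 2) := (Real.sqrt_sq (by positivity)).symm
    _ ≤ Real.sqrt ((a ^ 2 + b ^ 2) * (c ^ 2 + d ^ 2)) := Real.sqrt_le_sqrt h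
    _ = _ := Real.sqrt_mul (by positivity) _

private lemma bilin_cs {V : Type*} [AddCommGroup V] [Module ℝ V]
    (s : V →ₗ[ℝ] V →ₗ[ℝ] ℝ)
    (hsymm : ∀ v w : V, s v w = s w v)
    (hpsd : ∀ v : V, 0 ≤ s v v) (x y : V) :
    s x y ≤ Real.sqrt (s x x) * Real.sqrt (s y y) := by
  have hquad : ∀ t : ℝ, 0 ≤ s y y * (t * t) + 2 * s x y * t + s x x := by
    intro t
    have h := hpsd (x + t • y)
    simp only [map_add, map_smul, LinearMap.add_apply, LinearMap.smul_apply, smul_eq_mul] at h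
    rw [hsymm y x] at h
    ring_nf at h ⊢
    linarith
  have hd := discrim_le_zero hquad
  rw [discrim] at hd
  have hsq : (s x y) ^ 2 ≤ s x x * s y y := by nlinarith
  calc s x y ≤ |s x y| := le_abs_self _
    _ = Real.sqrt ((s x y) ^ 2) := (Real.sqrt_sq_eq_abs _).symm
    _ ≤ Real.sqrt (s x x * s y y) := Real.sqrt_le_sqrt hsq
    _ = Real.sqrt (s x x) * Real.sqrt (s y y) := Real.sqrt_mul (hpsd x) _

/-- **Abstract energy norm a priori error estimate** for the finite cell
method with least-squares stabilized Nitsche boundary conditions: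
coercivity and continuity of the stabilized form `B` with respect to the
augmented energy norm, together with the perturbed Galerkin orthogonality
caused by the inconsistent finite cell stabilization `s`, yield a
Strang-type bound against any discrete interpolant `wh`. -/
theorem energy_norm_error_estimate
    {V : Type*} [AddCommGroup V] [Module ℝ V]
    (s : V →ₗ[ℝ] V →ₗ[ℝ] ℝ)
    (hsymm : ∀ v w : V, s v w = s w v)
    (hpsd : ∀ v : V, 0 ≤ s v v)
    (p : Seminorm ℝ V)
    (α : ℝ) (hα : 0 ≤ α)
    (E : V → ℝ) (hE : ∀ v : V, E v = Real.sqrt ((p v) ^ 2 + α * s v v))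
    (B : V →ₗ[ℝ] V →ₗ[ℝ] ℝ)
    (Vh : Submodule ℝ V)
    (Cc Cb : ℝ) (hCc : 0 ≤ Cc) (hCb : 0 ≤ Cb)
    (hcoer : ∀ v ∈ Vh, (E v) ^ 2 ≤ Cc * B v v)
    (hcont : ∀ v w : V, |B v w| ≤ Cb * E v * E w)
    (u : V) (uh : V) (huh : uh ∈ Vh)
    (hgalerkin : ∀ v ∈ Vh, B (u - uh) v = α * s u v) :
    ∀ wh ∈ Vh, E (u - uh) ≤
      (1 + Cc * Cb) * E (u - wh) + Cc * Real.sqrt α * Real.sqrt (s u u) := by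
  have hEnn : ∀ v, 0 ≤ E v := fun v => (hE v) ▸ Real.sqrt_nonneg _
  have hin : ∀ v : V, 0 ≤ (p v) ^ 2 + α * s v v := fun v =>
    add_nonneg (sq_nonneg _) (mul_nonneg hα (hpsd v))
  have hEsq : ∀ v, E v ^ 2 = (p v) ^ 2 + α * s v v := by
    intro v; rw [hE v, Real.sq_sqrt (hin v)]
  -- triangle inequality for E
  have htri : ∀ x y : V, E (x + y) ≤ E x + E y := by
    intro x y
    have hsxy := bilin_cs s hsymm hpsd x y
    have hp : p (x + y) ≤ p x + p y := map_add_le_add p x y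
    have hexp : s (x + y) (x + y) = s x x + 2 * s x y + s y y := by
      simp only [map_add, LinearMap.add_apply]
      rw [hsymm y x]; ring
    set b := Real.sqrt (α * s x x) with hbdef
    set d := Real.sqrt (α * s y y) with hddef
    have hb2 : b ^ 2 = α * s x x := Real.sq_sqrt (mul_nonneg hα (hpsd x))
    have hd2 : d ^ 2 = α * s y y := Real.sq_sqrt (mul_nonneg hα (hpsd y))
    have key : p x * p y + b * d ≤ E x * E y := by
      have h := two_dim_cs (p x) b (p y) d (apply_nonneg p x) (Real.sqrt_nonneg _)
        (apply_nonneg p y) (Real.sqrt_nonneg _)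
      rwa [hb2, hd2, ← hE x, ← hE y] at h
    have hbd : α * s x y ≤ b * d := by
      have h1 : α * s x y ≤ α * (Real.sqrt (s x x) * Real.sqrt (s y y)) :=
        mul_le_mul_of_nonneg_left hsxy hα
      have h2 : b * d = α * (Real.sqrt (s x x) * Real.sqrt (s y y)) := by
        rw [hbdef, hddef, Real.sqrt_mul hα, Real.sqrt_mul hα]
        linear_combination (Real.sqrt (s x x) * Real.sqrt (s y y)) * Real.mul_self_sqrt hα
      linarith
    have h1 : E (x + y) ^ 2 ≤ (E x + E y) ^ 2 := by
      rw [hEsq, hexp]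
      have hEx2 := hEsq x
      have hEy2 := hEsq y
      nlinarith [key, hbd, hp, apply_nonneg p (x + y), apply_nonneg p x, apply_nonneg p y]
    calc E (x + y) = Real.sqrt (E (x + y) ^ 2) := (Real.sqrt_sq (hEnn _)).symm
      _ ≤ Real.sqrt ((E x + E y) ^ 2) := Real.sqrt_le_sqrt h1
      _ = E x + E y := Real.sqrt_sq (add_nonneg (hEnn x) (hEnn y))
  intro wh hwh
  set e := wh - uh with he
  have heVh : e ∈ Vh := Vh.sub_mem hwh huh
  -- √(α s e e) ≤ E e
  have hsee : Real.sqrt α * Real.sqrt (s e e) ≤ E e := by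
    have h1 : α * s e e ≤ E e ^ 2 := by
      rw [hEsq]; nlinarith [sq_nonneg (p e)]
    calc Real.sqrt α * Real.sqrt (s e e) = Real.sqrt (α * s e e) :=
          (Real.sqrt_mul hα _).symm
      _ ≤ Real.sqrt (E e ^ 2) := Real.sqrt_le_sqrt h1
      _ = E e := Real.sqrt_sq (hEnn e)
  have hsue : α * s u e ≤ Real.sqrt α * Real.sqrt (s u u) * E e := by
    have h1 : s u e ≤ Real.sqrt (s u u) * Real.sqrt (s e e) := bilin_cs s hsymm hpsd u e
    have h2 : α * s u e ≤ α * (Real.sqrt (s u u) * Real.sqrt (s e e)) :=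
      mul_le_mul_of_nonneg_left h1 hα
    have h3 : α * (Real.sqrt (s u u) * Real.sqrt (s e e))
        = (Real.sqrt α * Real.sqrt (s u u)) * (Real.sqrt α * Real.sqrt (s e e)) := by
      linear_combination (Real.sqrt (s u u) * Real.sqrt (s e e)) * (Real.mul_self_sqrt hα).symm
    have h4 : (Real.sqrt α * Real.sqrt (s u u)) * (Real.sqrt α * Real.sqrt (s e e))
        ≤ (Real.sqrt α * Real.sqrt (s u u)) * E e :=
      mul_le_mul_of_nonneg_left hsee (by positivity)
    linarith
  have hEneg : E (wh - u) = E (u - wh) := by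
    rw [hE, hE]
    have h1 : p (wh - u) = p (u - wh) := by rw [← neg_sub u wh, map_neg_eq_map]
    have h2 : s (wh - u) (wh - u) = s (u - wh) (u - wh) := by
      rw [← neg_sub u wh]; simp only [map_neg, LinearMap.neg_apply, neg_neg]
    rw [h1, h2]
  have hEe : E e ≤ Cc * Cb * E (u - wh) + Cc * Real.sqrt α * Real.sqrt (s u u) := by
    rcases eq_or_lt_of_le (hEnn e) with h0 | h0
    · rw [← h0]
      exact add_nonneg (mul_nonneg (mul_nonneg hCc hCb) (hEnn _)) (by positivity)
    · have h2 : E e ^ 2 ≤ Cc * B e e := hcoer e heVh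
      have hB : B e e = B (wh - u) e + α * s u e := by
        have hdecomp : e = (wh - u) + (u - uh) := by rw [he]; abel
        have := hgalerkin e heVh
        calc B e e = B ((wh - u) + (u - uh)) e := by rw [← hdecomp]
          _ = B (wh - u) e + B (u - uh) e := by rw [map_add]; rfl
          _ = B (wh - u) e + α * s u e := by rw [this]
      have hcont' : B (wh - u) e ≤ Cb * E (u - wh) * E e := by
        have h := hcont (wh - u) e
        rw [hEneg] at h
        linarith [le_abs_self (B (wh - u) e)]
      have hsq : E e * E e ≤ (Cc * Cb * E (u - wh) + Cc * Real.sqrt α * Real.sqrt (s u u)) * E e := by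
        have : E e ^ 2 ≤ Cc * (Cb * E (u - wh) * E e + α * s u e) := by
          calc E e ^ 2 ≤ Cc * B e e := h2
            _ = Cc * (B (wh - u) e + α * s u e) := by rw [hB]
            _ ≤ Cc * (Cb * E (u - wh) * E e + α * s u e) := by
                apply mul_le_mul_of_nonneg_left _ hCc; linarith
        nlinarith [mul_le_mul_of_nonneg_left hsue hCc]
      exact le_of_mul_le_mul_right hsq h0
  have hdecomp2 : u - uh = (u - wh) + e := by rw [he]; abel
  calc E (u - uh) = E ((u - wh) + e) := by rw [← hdecomp2]
    _ ≤ E (u - wh) + E e := htri _ _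
    _ ≤ E (u - wh) + (Cc * Cb * E (u - wh) + Cc * Real.sqrt α * Real.sqrt (s u u)) := by
        linarith
    _ = (1 + Cc * Cb) * E (u - wh) + Cc * Real.sqrt α * Real.sqrt (s u u) := by ring
end

section
/- Let V be a real vector space equipped with a nonnegative function ⦀·⦀ : V → ℝ, let H be a real inner product space, let ι : V → H be a linear map, let B be a bilinear form on V with |B(v, w)| ≤ C_b·⦀v⦀·⦀w⦀ for all v, w ∈ V, let V_h be a subspace of V, let e ∈ V, and let ρ : V → ℝ satisfy B(e, v) = ρ(v) for all v ∈ V_h. Suppose there exist φ ∈ V, πφ ∈ V_h, a real number R, and constants C_r, C_d, C_ρ ≥ 0 such that ⟨ι e, ι e⟩ = B(e, φ) + R with |R| ≤ C_r·⦀e⦀·‖ι e‖, ⦀φ − πφ⦀ ≤ C_d·‖ι e‖, and |ρ(πφ)| ≤ C_ρ·‖ι e‖. Then ‖ι e‖ ≤ (C_b·C_d + C_r)·⦀e⦀ + C_ρ. -/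
/-- **Abstract duality (Aubin–Nitsche) argument** underlying the L² error
estimate: the error `e` measured in the inner product space `H` (via the
linear map `ι`) is bounded using the dual solution `φ`, its interpolant `πφ`,
the extra least-squares remainder `R`, and the Galerkin residual `ρ` coming
from the inconsistent finite cell stabilization. -/
theorem abstract_duality_argument
    {V : Type*} [AddCommGroup V] [Module ℝ V]
    {H : Type*} [NormedAddCommGroup H] [InnerProductSpace ℝ H]
    (nn : V → ℝ) (hnn : ∀ v : V, 0 ≤ nn v)
    (ι : V →ₗ[ℝ] H)
    (B : V →ₗ[ℝ] V →ₗ[ℝ] ℝ)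
    (Cb : ℝ) (hcont : ∀ v w : V, |B v w| ≤ Cb * nn v * nn w)
    (Vh : Submodule ℝ V)
    (e : V) (ρ : V → ℝ)
    (hres : ∀ v ∈ Vh, B e v = ρ v)
    (φ : V) (πφ : V) (hπφ : πφ ∈ Vh)
    (R : ℝ) (Cr Cd Cρ : ℝ)
    (hCr : 0 ≤ Cr) (hCd : 0 ≤ Cd) (hCρ : 0 ≤ Cρ)
    (hdual : (inner ℝ (ι e) (ι e) : ℝ) = B e φ + R)
    (hR : |R| ≤ Cr * nn e * ‖ι e‖)
    (hinterp : nn (φ - πφ) ≤ Cd * ‖ι e‖)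
    (hρ : |ρ πφ| ≤ Cρ * ‖ι e‖) :
    ‖ι e‖ ≤ (Cb * Cd + Cr) * nn e + Cρ := by
  have h0 := hnn e
  have hB : 0 ≤ Cb * nn e := by
    rcases h0.eq_or_lt with h | h
    · simp [← h]
    · have := (abs_nonneg (B e e)).trans (hcont e e)
      nlinarith
  have hsq : ‖ι e‖ ^ 2 = B e (φ - πφ) + ρ πφ + R := by
    rw [← real_inner_self_eq_norm_sq, hdual, map_sub, hres πφ hπφ]
    ring
  have hb1 : B e (φ - πφ) ≤ Cb * nn e * (Cd * ‖ι e‖) := by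
    calc B e (φ - πφ) ≤ |B e (φ - πφ)| := le_abs_self _
    _ ≤ Cb * nn e * nn (φ - πφ) := hcont e _
    _ ≤ Cb * nn e * (Cd * ‖ι e‖) := mul_le_mul_of_nonneg_left hinterp hB
  have hρ' := (le_abs_self (ρ πφ)).trans hρ
  have hR' := (le_abs_self R).trans hR
  have key : ‖ι e‖ ^ 2 ≤ ((Cb * Cd + Cr) * nn e + Cρ) * ‖ι e‖ := by
    rw [hsq]; nlinarith
  rcases (norm_nonneg (ι e)).eq_or_lt with h | h
  · rw [← h]
    nlinarith [mul_nonneg hCd hB, mul_nonneg hCr h0]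
  · nlinarith [key]
end
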